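/- Suppose smooth curves A, J : ℝ → ℝ³ satisfy dA/dt = −A × W and dJ/dt = −J × W for a common curve W : ℝ → ℝ³, with ‖J(t)‖ = J₀ ≠ 0 constant. Then X(t) = (A(t) × J(t))/J₀² satisfies dX/dt = −X × W. -/

import Mathlib

noncomputable section

abbrev R3 := Fin 3 → ℝ

def dot3 (a b : R3) : ℝ := a 0 * b 0 + a 1 * b 1 + a 2 * b 2
def norm3 (a : R3) : ℝ := Real.sqrt (dot3 a a)
def cross3 (a b : R3) : R3 :=
  ![a 1 * b 2 - a 2 * b 1, a 2 * b 0 - a 0 * b 2, a 0 * b 1 - a 1 * b 0]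

/-- Kepler Hamiltonian. -/
def keplerH (q p : R3) : ℝ := norm3 p ^ 2 / 2 - 1 / norm3 q
/-- Components of the angular momentum `J = q × p`. -/
def Jc (i : Fin 3) (q p : R3) : ℝ := cross3 q p i
/-- Laplace–Runge–Lenz vector `A = p × J − q/‖q‖`. -/
def LRL (q p : R3) : R3 := fun i => cross3 p (cross3 q p) i - q i / norm3 q

/-- Partial derivative in `qⁱ`. -/
def pdq (f : R3 → R3 → ℝ) (i : Fin 3) (q p : R3) : ℝ :=
  deriv (fun t => f (Function.update q i t) p) (q i)
/-- Partial derivative in `pᵢ`. -/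
def pdp (f : R3 → R3 → ℝ) (i : Fin 3) (q p : R3) : ℝ :=
  deriv (fun t => f q (Function.update p i t)) (p i)
/-- Canonical Poisson bracket. -/
def poisson (f g : R3 → R3 → ℝ) (q p : R3) : ℝ :=
  ∑ i : Fin 3, (pdq f i q p * pdp g i q p - pdp f i q p * pdq g i q p)

/-- Levi-Civita symbol on `Fin 3`. -/
def eps (i j k : Fin 3) : ℝ :=
  if (i = 0 ∧ j = 1 ∧ k = 2) ∨ (i = 1 ∧ j = 2 ∧ k = 0) ∨ (i = 2 ∧ j = 0 ∧ k = 1) then 1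
  else if (i = 0 ∧ j = 2 ∧ k = 1) ∨ (i = 2 ∧ j = 1 ∧ k = 0) ∨ (i = 1 ∧ j = 0 ∧ k = 2) then -1
  else 0

lemma hasDerivAt_cross (f g : ℝ → R3) (f' g' : R3) (t : ℝ)
    (hf : HasDerivAt f f' t) (hg : HasDerivAt g g' t) :
    HasDerivAt (fun s => cross3 (f s) (g s))
      (fun i => cross3 f' (g t) i + cross3 (f t) g' i) t := by
  have hfc : ∀ i, HasDerivAt (fun s => f s i) (f' i) t := fun i => (hasDerivAt_pi.mp hf) i
  have hgc : ∀ i, HasDerivAt (fun s => g s i) (g' i) t := fun i => (hasDerivAt_pi.mp hg) i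
  apply hasDerivAt_pi.mpr
  intro i
  fin_cases i
  · simp only [cross3]
    convert (((hfc 1).mul (hgc 2)).sub ((hfc 2).mul (hgc 1))) using 1
    · rfl
    simp
    ring
  · simp only [cross3]
    convert (((hfc 2).mul (hgc 0)).sub ((hfc 0).mul (hgc 2))) using 1
    · rfl
    simp
    ring
  · simp only [cross3]
    convert (((hfc 0).mul (hgc 1)).sub ((hfc 1).mul (hgc 0))) using 1
    · rfl
    simp
    ring

theorem stmt8 (A J : ℝ → R3) (W : ℝ → R3) (J₀ : ℝ) (hJ₀ : J₀ ≠ 0)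
    (hA : ∀ t : ℝ, HasDerivAt A (-(cross3 (A t) (W t))) t)
    (hJ : ∀ t : ℝ, HasDerivAt J (-(cross3 (J t) (W t))) t)
    (hnorm : ∀ t : ℝ, norm3 (J t) = J₀) :
    ∀ t : ℝ,
      HasDerivAt (fun s => (J₀ ^ 2)⁻¹ • cross3 (A s) (J s))
        (-(cross3 ((J₀ ^ 2)⁻¹ • cross3 (A t) (J t)) (W t))) t := by
  intro t
  have h := (hasDerivAt_cross A J (-(cross3 (A t) (W t))) (-(cross3 (J t) (W t))) t
    (hA t) (hJ t)).const_smul ((J₀ ^ 2)⁻¹)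
  refine h.congr_deriv ?_
  funext i
  fin_cases i <;>
  · simp [cross3]
    ring
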